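/- There exists an n×m integer matrix Λ with Λ·Φ_k = 0 such that for every tuple (r_1,…,r_k) with 0 ≤ r_j ≤ n_j for each j, the n×n submatrix of Λ obtained by deleting, for every j, the column of index r_j in the j-th column block, has nonzero determinant. (Equivalently: the columns of Λ define a characteristic function λ on the product of simplices Δ^{n_1}×⋯×Δ^{n_k} — the n columns assigned to the facets meeting at any vertex are linearly independent — and Λ·Φ_k = 0 expresses that the kernel of the induced torus homomorphism exp Λ : T^m → T^n contains the image of exp Φ_k : T^k → T^m.) -/

import Mathlib

theorem bezout_finset {ι : Type*} [DecidableEq ι] (f : ι → ℕ) (s : Finset ι) :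
    ∃ u : ι → ℤ, ∑ i ∈ s, u i * (f i : ℤ) = ((s.gcd f : ℕ) : ℤ) := by
  classical
  induction s using Finset.induction_on with
  | empty => exact ⟨0, by simp⟩
  | @insert a s ha ih =>
    obtain ⟨u, hu⟩ := ih
    rw [Finset.gcd_insert]
    refine ⟨fun i => if i = a then Nat.gcdA (f a) (s.gcd f) else Nat.gcdB (f a) (s.gcd f) * u i, ?_⟩
    rw [Finset.sum_insert ha]; simp only [if_pos rfl]
    have h2 : ∑ i ∈ s, (if i = a then Nat.gcdA (f a) (s.gcd f) else Nat.gcdB (f a) (s.gcd f) * u i) * (f i : ℤ)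
        = Nat.gcdB (f a) (s.gcd f) * ∑ i ∈ s, u i * (f i : ℤ) := by
      rw [Finset.mul_sum]
      refine Finset.sum_congr rfl fun i hi => ?_
      rw [if_neg (by rintro rfl; exact ha hi)]; ring
    rw [h2, hu]
    have h3 := Nat.gcd_eq_gcd_ab (f a) (s.gcd f)
    have hgcd : ((gcd (f a) (s.gcd f) : ℕ) : ℤ) = ((Nat.gcd (f a) (s.gcd f) : ℕ) : ℤ) := by
      norm_cast
    rw [hgcd, h3]; simp; ring

/-- The `m × k` integer matrix `Φ_k`, with rows indexed by pairs `⟨i, α⟩`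
(the `α`-th row of the `i`-th block) and columns indexed by `Fin k`:
the `i`-th block of the `j`-th column is `χ i` if `j = i`, is `c i ⬝ j` if `j < i`,
and vanishes if `j > i`. -/
def PhiMat (k : ℕ) (n : Fin k → ℕ) (χ : (i : Fin k) → Fin (n i + 1) → ℕ)
    (c : (i : Fin k) → Fin (n i + 1) → Fin k → ℤ) :
    ((i : Fin k) × Fin (n i + 1)) → Fin k → ℤ :=
  fun q j => if j = q.1 then (χ q.1 q.2 : ℤ) else if j < q.1 then c q.1 q.2 j else 0

section Construction

variable {k : ℕ} {n : Fin k → ℕ} (χ : (i : Fin k) → Fin (n i + 1) → ℕ)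
  (c : (i : Fin k) → Fin (n i + 1) → Fin k → ℤ) (u : (i : Fin k) → Fin (n i + 1) → ℤ)

/-- the block-diagonal "vertex kernel" part of `Λ`. -/
def Vmat : ((i : Fin k) × Fin (n i)) → ((i : Fin k) × Fin (n i + 1)) → ℤ :=
  fun p q => if q.1 = p.1 then
      (χ p.1 p.2.succ : ℤ) * (if (q.2 : ℕ) = 0 then 1 else 0)
        - (χ p.1 0 : ℤ) * (if (q.2 : ℕ) = (p.2 : ℕ) + 1 then 1 else 0)
    else 0

/-- the `k × k` matrix `Ψ · Φ` where `Ψ` has rows the Bezout vectors `u j`. -/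
def Gmat : Matrix (Fin k) (Fin k) ℤ :=
  fun j j' => ∑ β, u j β * PhiMat k n χ c ⟨j, β⟩ j'

/-- `V · Φ`. -/
def fvec : ((i : Fin k) × Fin (n i)) → Fin k → ℤ :=
  fun p j => ∑ q : (i : Fin k) × Fin (n i + 1), Vmat χ p q * PhiMat k n χ c q j

/-- The characteristic matrix `Λ`. -/
noncomputable def Lmat : ((i : Fin k) × Fin (n i)) → ((i : Fin k) × Fin (n i + 1)) → ℤ :=
  fun p q => Vmat χ p q
    + (-∑ j, fvec χ c p j * (Gmat χ c u)⁻¹ j q.1) * u q.1 q.2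

theorem Gmat_tri : (Gmat χ c u).BlockTriangular OrderDual.toDual := by
  intro j j' h
  have h' : (j : Fin k) < j' := h
  unfold Gmat
  refine Finset.sum_eq_zero fun β _ => ?_
  have e1 : PhiMat k n χ c ⟨j, β⟩ j' = 0 := by
    rw [PhiMat]
    rw [if_neg (ne_of_gt h'), if_neg (not_lt_of_gt h')]
  rw [e1, mul_zero]

theorem Gmat_diag (hu : ∀ i, ∑ β, u i β * (χ i β : ℤ) = 1) (j : Fin k) :
    Gmat χ c u j j = 1 := by
  unfold Gmat
  have e1 : ∀ β, PhiMat k n χ c ⟨j, β⟩ j = (χ j β : ℤ) := fun β => by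
    rw [PhiMat, if_pos rfl]
  simp only [e1]
  exact hu j

theorem Gmat_det (hu : ∀ i, ∑ β, u i β * (χ i β : ℤ) = 1) : (Gmat χ c u).det = 1 := by
  rw [Matrix.det_of_lowerTriangular _ (Gmat_tri χ c u)]
  simp [Gmat_diag χ c u hu]

theorem fvec_eq_zero (p : (i : Fin k) × Fin (n i)) (j : Fin k) (h : p.1 ≤ j) :
    fvec χ c p j = 0 := by
  unfold fvec
  rw [← Finset.univ_sigma_univ, Finset.sum_sigma]
  rw [Finset.sum_eq_single p.1 (fun i _ hi => Finset.sum_eq_zero fun β _ => by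
    rw [Vmat, if_neg hi, zero_mul]) (fun h => absurd (Finset.mem_univ _) h)]
  rcases eq_or_lt_of_le h with hj | hj
  · subst hj
    have e1 : ∀ β : Fin (n p.1 + 1), PhiMat k n χ c ⟨p.1, β⟩ p.1 = (χ p.1 β : ℤ) := fun β => by
      rw [PhiMat, if_pos rfl]
    have e2 : ∀ β : Fin (n p.1 + 1), ((β : ℕ) = 0) = (β = 0) := fun β => by
      exact propext Fin.val_eq_zero_iff
    have e3 : ∀ β : Fin (n p.1 + 1), ((β : ℕ) = (p.2 : ℕ) + 1) = (β = p.2.succ) := fun β => by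
      simp [Fin.ext_iff]
    simp only [Vmat, if_pos rfl, e1, e2, e3, sub_mul, mul_assoc, ite_mul, one_mul, zero_mul,
      mul_ite, mul_zero, Finset.sum_sub_distrib, Finset.sum_ite_eq', Finset.mem_univ, if_pos]
    ring
  · refine Finset.sum_eq_zero fun β _ => ?_
    have e1 : PhiMat k n χ c ⟨p.1, β⟩ j = 0 := by
      rw [PhiMat, if_neg (ne_of_gt hj), if_neg (not_lt_of_gt hj)]
    rw [e1, mul_zero]

theorem Lmat_mul_Phi (hu : ∀ i, ∑ β, u i β * (χ i β : ℤ) = 1)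
    (p : (i : Fin k) × Fin (n i)) (j : Fin k) :
    ∑ q : (i : Fin k) × Fin (n i + 1), Lmat χ c u p q * PhiMat k n χ c q j = 0 := by
  have hdet : IsUnit (Gmat χ c u).det := by
    rw [Gmat_det χ c u hu]; exact isUnit_one
  have hBG : (Gmat χ c u)⁻¹ * Gmat χ c u = 1 := Matrix.nonsing_inv_mul _ hdet
  unfold Lmat
  simp only [add_mul, Finset.sum_add_distrib]
  have e1 : ∑ q : (i : Fin k) × Fin (n i + 1), Vmat χ p q * PhiMat k n χ c q j
      = fvec χ c p j := rfl
  have e2 : ∑ q : (i : Fin k) × Fin (n i + 1),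
      (-∑ j0, fvec χ c p j0 * (Gmat χ c u)⁻¹ j0 q.1) * u q.1 q.2 * PhiMat k n χ c q j
      = ∑ i : Fin k, (-∑ j0, fvec χ c p j0 * (Gmat χ c u)⁻¹ j0 i) * Gmat χ c u i j := by
    rw [← Finset.univ_sigma_univ, Finset.sum_sigma]
    refine Finset.sum_congr rfl fun i _ => ?_
    rw [Gmat, Finset.mul_sum]
    exact Finset.sum_congr rfl fun β _ => by ring
  rw [e1, e2]
  have e3 : ∑ i : Fin k, (-∑ j0, fvec χ c p j0 * (Gmat χ c u)⁻¹ j0 i) * Gmat χ c u i j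
      = -fvec χ c p j := by
    have e4 : ∑ i : Fin k, (-∑ j0, fvec χ c p j0 * (Gmat χ c u)⁻¹ j0 i) * Gmat χ c u i j
        = -∑ j0, fvec χ c p j0 * ∑ i, (Gmat χ c u)⁻¹ j0 i * Gmat χ c u i j := by
      simp only [neg_mul, Finset.sum_mul, Finset.sum_neg_distrib, Finset.mul_sum]
      rw [Finset.sum_comm]
      refine congrArg _ (Finset.sum_congr rfl fun j0 _ => Finset.sum_congr rfl fun i _ => by ring)
    rw [e4]
    have e5 : ∀ j0, ∑ i, (Gmat χ c u)⁻¹ j0 i * Gmat χ c u i j = (1 : Matrix (Fin k) (Fin k) ℤ) j0 j := by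
      intro j0
      rw [← hBG, Matrix.mul_apply]
    simp only [e5, Matrix.one_apply, mul_ite, mul_one, mul_zero, Finset.sum_ite_eq, Finset.sum_ite_eq',
      Finset.mem_univ, if_pos]
  rw [e3, add_neg_cancel]

theorem dcoef_zero (hu : ∀ i, ∑ β, u i β * (χ i β : ℤ) = 1)
    (p : (i : Fin k) × Fin (n i)) (j' : Fin k) (h : p.1 ≤ j') :
    (-∑ j, fvec χ c p j * (Gmat χ c u)⁻¹ j j') = 0 := by
  have hdet : IsUnit (Gmat χ c u).det := by
    rw [Gmat_det χ c u hu]; exact isUnit_one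
  haveI := (Gmat χ c u).invertibleOfIsUnitDet hdet
  have htri := Matrix.blockTriangular_inv_of_blockTriangular (Gmat_tri χ c u)
  rw [neg_eq_zero]
  refine Finset.sum_eq_zero fun j _ => ?_
  by_cases hj : p.1 ≤ j
  · rw [fvec_eq_zero χ c p j hj, zero_mul]
  · push_neg at hj
    have hlt : j < j' := lt_of_lt_of_le hj h
    rw [htri (show OrderDual.toDual j' < OrderDual.toDual j from hlt), mul_zero]

theorem Lmat_support (hu : ∀ i, ∑ β, u i β * (χ i β : ℤ) = 1)
    (p : (i : Fin k) × Fin (n i)) (q : (i : Fin k) × Fin (n i + 1))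
    (h : p.1 < q.1) : Lmat χ c u p q = 0 := by
  rw [Lmat, Vmat, if_neg (ne_of_gt h), dcoef_zero χ c u hu p q.1 (le_of_lt h), zero_mul, add_zero]

theorem Lmat_diag (hu : ∀ i, ∑ β, u i β * (χ i β : ℤ) = 1)
    (i0 : Fin k) (α : Fin (n i0)) (β : Fin (n i0 + 1)) :
    Lmat χ c u ⟨i0, α⟩ ⟨i0, β⟩ =
      (χ i0 α.succ : ℤ) * (if (β : ℕ) = 0 then 1 else 0)
        - (χ i0 0 : ℤ) * (if (β : ℕ) = (α : ℕ) + 1 then 1 else 0) := by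
  rw [Lmat]
  rw [dcoef_zero χ c u hu ⟨i0, α⟩ i0 le_rfl, zero_mul, add_zero, Vmat, if_pos rfl]

/-- The vertex minor within a single block, with the `r i0`-th column deleted. -/
theorem block_det_ne_zero (hχpos : ∀ i α, 0 < χ i α)
    (hu : ∀ i, ∑ β, u i β * (χ i β : ℤ) = 1) (i0 : Fin k) (r0 : Fin (n i0 + 1)) :
    (Matrix.of fun α β : Fin (n i0) =>
      ((Lmat χ c u ⟨i0, α⟩ ⟨i0, r0.succAbove β⟩ : ℤ) : ℚ)).det ≠ 0 := by
  rw [Ne, ← Matrix.exists_vecMul_eq_zero_iff]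
  rintro ⟨v, hv0, hv⟩
  apply hv0
  have hD : ∀ (α β : Fin (n i0)),
      ((Lmat χ c u ⟨i0, α⟩ ⟨i0, r0.succAbove β⟩ : ℤ) : ℚ)
        = (χ i0 α.succ : ℚ) * (if (r0.succAbove β : ℕ) = 0 then 1 else 0)
          - (χ i0 0 : ℚ) * (if (r0.succAbove β : ℕ) = (α : ℕ) + 1 then 1 else 0) := by
    intro α β
    rw [Lmat_diag χ c u hu i0 α (r0.succAbove β)]
    push_cast
    rfl
  have hentry : ∀ β, ∑ α, v α * ((Lmat χ c u ⟨i0, α⟩ ⟨i0, r0.succAbove β⟩ : ℤ) : ℚ) = 0 := by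
    intro β
    simpa [Matrix.vecMul, dotProduct] using congrFun hv β
  have h1 : ∀ α : Fin (n i0), α.succ ≠ r0 → v α = 0 := by
    intro α hα
    obtain ⟨β, hβ⟩ := Fin.exists_succAbove_eq hα
    have hsb : (r0.succAbove β : ℕ) = (α : ℕ) + 1 := by rw [hβ, Fin.val_succ]
    have h := hentry β
    simp only [hD, hsb] at h
    have hconds : ∀ α' : Fin (n i0),
        (((α : ℕ) + 1 = (α' : ℕ) + 1)) = (α' = α) := by
      intro α'
      simp [Fin.ext_iff, eq_comm]
    simp only [Nat.succ_ne_zero, if_neg, hconds, if_false, zero_sub, mul_neg, mul_ite, mul_zero,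
      Finset.sum_neg_distrib, neg_eq_zero] at h
    simp only [mul_one, Finset.sum_ite_eq', Finset.mem_univ, if_pos] at h
    have hχ : (0 : ℚ) < (χ i0 0 : ℚ) := by exact_mod_cast hχpos i0 0
    exact (mul_eq_zero.1 h).resolve_right (ne_of_gt hχ)
  funext α
  by_cases hα : α.succ = r0
  · have h0 : (0 : Fin (n i0 + 1)) ≠ r0 := by
      rw [← hα]; exact (Fin.succ_ne_zero α).symm
    obtain ⟨β0, hβ0⟩ := Fin.exists_succAbove_eq h0
    have hsb : (r0.succAbove β0 : ℕ) = 0 := by rw [hβ0]; rfl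
    have h := hentry β0
    simp only [hD, hsb, if_pos rfl, mul_one] at h
    have h' : ∑ α', v α' * ((χ i0 α'.succ : ℚ) * 1 - (χ i0 0 : ℚ) * (if (0:ℕ) = (α' : ℕ) + 1 then 1 else 0)) = 0 := h
    have h'' : ∑ α', v α' * (χ i0 α'.succ : ℚ) = 0 := by
      rw [← h']
      refine Finset.sum_congr rfl fun α' _ => ?_
      rw [if_neg (by omega), mul_zero, mul_one, sub_zero]
    rw [Finset.sum_eq_single α (fun α' _ hne => by
      rw [h1 α' (fun hs => hne (by
        apply Fin.succ_injective
        rw [hs, hα])), zero_mul]) (fun h => absurd (Finset.mem_univ _) h)] at h''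
    have hχ : (0 : ℚ) < (χ i0 α.succ : ℚ) := by exact_mod_cast hχpos i0 α.succ
    exact (mul_eq_zero.1 h'').resolve_right (ne_of_gt hχ)
  · exact h1 α hα

theorem Lmat_li (hχpos : ∀ i α, 0 < χ i α)
    (hu : ∀ i, ∑ β, u i β * (χ i β : ℤ) = 1) (r : (i : Fin k) → Fin (n i + 1)) :
    LinearIndependent ℚ
      (fun q : {q : (i : Fin k) × Fin (n i + 1) // q.2 ≠ r q.1} =>
        (fun p : (i : Fin k) × Fin (n i) => ((Lmat χ c u p ↑q : ℤ) : ℚ))) := by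
  classical
  set M : Matrix ((i : Fin k) × Fin (n i)) ((i : Fin k) × Fin (n i)) ℚ :=
    Matrix.of (fun p p' => ((Lmat χ c u p ⟨p'.1, (r p'.1).succAbove p'.2⟩ : ℤ) : ℚ)) with hM
  have htri : M.BlockTriangular (fun p => OrderDual.toDual p.1) := by
    intro p p' hlt
    have h' : p.1 < p'.1 := hlt
    show ((Lmat χ c u p ⟨p'.1, (r p'.1).succAbove p'.2⟩ : ℤ) : ℚ) = 0
    rw [Lmat_support χ c u hu p ⟨p'.1, (r p'.1).succAbove p'.2⟩ h', Int.cast_zero]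
  have hdetM : M.det ≠ 0 := by
    rw [Matrix.BlockTriangular.det_fintype htri]
    refine Finset.prod_ne_zero_iff.2 fun kk _ => ?_
    let e : Fin (n (OrderDual.ofDual kk)) ≃
        {p : (i : Fin k) × Fin (n i) // OrderDual.toDual p.1 = kk} :=
      { toFun := fun α => ⟨⟨OrderDual.ofDual kk, α⟩, rfl⟩
        invFun := fun p => Fin.cast
          (congrArg (fun j : (Fin k)ᵒᵈ => n (OrderDual.ofDual j)) p.2) p.1.2
        left_inv := fun α => rfl
        right_inv := by
          rintro ⟨⟨i, β⟩, h⟩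
          subst h
          rfl }
    have heq : M.toSquareBlock (fun p => OrderDual.toDual p.1) kk
        = Matrix.reindex e e (Matrix.of fun α β : Fin (n (OrderDual.ofDual kk)) =>
            ((Lmat χ c u ⟨OrderDual.ofDual kk, α⟩
              ⟨OrderDual.ofDual kk, (r (OrderDual.ofDual kk)).succAbove β⟩ : ℤ) : ℚ)) := by
      ext ⟨⟨i, β⟩, h⟩ ⟨⟨i', β'⟩, h'⟩
      subst h
      have hii : i' = i := h'
      subst hii
      rfl
    rw [heq, Matrix.det_reindex_self]
    exact block_det_ne_zero χ c u hχpos hu (OrderDual.ofDual kk) (r (OrderDual.ofDual kk))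
  have hMunit : IsUnit M := (Matrix.isUnit_iff_isUnit_det M).2 (Ne.isUnit hdetM)
  have hli : LinearIndependent ℚ (fun p' => M.transpose p') :=
    Matrix.linearIndependent_cols_iff_isUnit.2 hMunit
  have hbij : Function.Bijective (fun p' : (i : Fin k) × Fin (n i) =>
      (⟨⟨p'.1, (r p'.1).succAbove p'.2⟩, Fin.succAbove_ne _ _⟩ :
        {q : (i : Fin k) × Fin (n i + 1) // q.2 ≠ r q.1})) := by
    constructor
    · rintro ⟨i, α⟩ ⟨i', α'⟩ hab
      simp only [Subtype.mk.injEq, Sigma.mk.inj_iff] at hab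
      obtain ⟨rfl, h2⟩ := hab
      have h3 := eq_of_heq h2
      have h4 := Fin.succAbove_right_injective (p := r i) h3
      rw [h4]
    · rintro ⟨⟨i, β⟩, hβ⟩
      obtain ⟨α, hα⟩ := Fin.exists_succAbove_eq hβ
      exact ⟨⟨i, α⟩, Subtype.ext (congrArg (Sigma.mk i) hα)⟩
  exact (linearIndependent_equiv (Equiv.ofBijective _ hbij)).1 hli

end Construction

/-- There exists an `n × m` integer matrix `Λ` with `Λ · Φ_k = 0` such that for every
choice `r` of one column index in each block, the `n` columns of `Λ` obtained by deleting,
for every `j`, the column of index `r j` in the `j`-th block are linearly independent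
over `ℚ` (equivalently, the corresponding `n × n` submatrix has nonzero determinant);
i.e. the columns of `Λ` define a characteristic function on `Δ^{n_1} × ⋯ × Δ^{n_k}`. -/
theorem exists_characteristic_matrix_of_tower_data
    (k : ℕ) (hk : 1 ≤ k) (n : Fin k → ℕ) (hn : ∀ i, 1 ≤ n i)
    (χ : (i : Fin k) → Fin (n i + 1) → ℕ) (hχpos : ∀ i α, 0 < χ i α)
    (hgcd : ∀ i, Finset.univ.gcd (χ i) = 1)
    (c : (i : Fin k) → Fin (n i + 1) → Fin k → ℤ) :
    ∃ Λ : ((i : Fin k) × Fin (n i)) → ((i : Fin k) × Fin (n i + 1)) → ℤ,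
      (∀ p : (i : Fin k) × Fin (n i), ∀ j : Fin k,
        ∑ q : (i : Fin k) × Fin (n i + 1), Λ p q * PhiMat k n χ c q j = 0) ∧
      ∀ r : (i : Fin k) → Fin (n i + 1),
        LinearIndependent ℚ
          (fun q : {q : (i : Fin k) × Fin (n i + 1) // q.2 ≠ r q.1} =>
            (fun p : (i : Fin k) × Fin (n i) => (Λ p ↑q : ℚ))) := by
  have hex : ∀ i : Fin k, ∃ u : Fin (n i + 1) → ℤ, ∑ β, u β * (χ i β : ℤ) = 1 := by
    intro i
    obtain ⟨u0, hu0⟩ := bezout_finset (χ i) Finset.univ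
    refine ⟨u0, ?_⟩
    rw [hu0, hgcd i]
    norm_num
  choose u hu using hex
  exact ⟨Lmat χ c u, fun p j => Lmat_mul_Phi χ c u hu p j,
    fun r => Lmat_li χ c u hχpos hu r⟩
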